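/- arXiv:2312.16796 — 2 statements merged into one kernel-verified Lean document; each statement's English description precedes it below -/
import Mathlib

section
/- Let F be a finite field with at least 4 elements and G a subgroup of GL₂(F) that contains a subgroup of order |F| and acts irreducibly on F². Then G contains SL₂(F). -/
set_option linter.unusedSectionVars false
set_option linter.unreachableTactic false
set_option linter.unusedTactic false
set_option maxHeartbeats 1000000
open Matrix

namespace SL2Aux

variable {F : Type*} [Field F] [Fintype F]

/-- The group of transvection-like elements fixing `v`, of determinant one. -/
def TT (v : Fin 2 → F) : Set (GL (Fin 2) F) :=
  {M | Matrix.mulVec (M : Matrix (Fin 2) (Fin 2) F) v = v ∧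
       (M : Matrix (Fin 2) (Fin 2) F).det = 1}

def Uu (x : F) : GL (Fin 2) F :=
  ⟨!![1, x; 0, 1], !![1, -x; 0, 1], by ext i j; fin_cases i <;> fin_cases j <;>
    simp [Matrix.mul_apply, Fin.sum_univ_two], by ext i j; fin_cases i <;> fin_cases j <;>
    simp [Matrix.mul_apply, Fin.sum_univ_two]⟩

def Ll (x : F) : GL (Fin 2) F :=
  ⟨!![1, 0; x, 1], !![1, 0; -x, 1], by ext i j; fin_cases i <;> fin_cases j <;>
    simp [Matrix.mul_apply, Fin.sum_univ_two], by ext i j; fin_cases i <;> fin_cases j <;>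
    simp [Matrix.mul_apply, Fin.sum_univ_two]⟩

lemma Uu_mem (x : F) : Uu x ∈ TT (![1,0] : Fin 2 → F) := by
  constructor
  · ext i; fin_cases i <;> simp [Uu, Matrix.mulVec, dotProduct, Fin.sum_univ_two]
  · simp [Uu, Matrix.det_fin_two]

lemma Ll_mem (x : F) : Ll x ∈ TT (![0,1] : Fin 2 → F) := by
  constructor
  · ext i; fin_cases i <;> simp [Ll, Matrix.mulVec, dotProduct, Fin.sum_univ_two]
  · simp [Ll, Matrix.det_fin_two]

lemma TT_e1_char (M : GL (Fin 2) F) : M ∈ TT (![1,0] : Fin 2 → F) ↔ ∃ x : F, M = Uu x := by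
  constructor
  · rintro ⟨h1, h2⟩
    refine ⟨(M : Matrix (Fin 2) (Fin 2) F) 0 1, ?_⟩
    have h00 : (M : Matrix (Fin 2) (Fin 2) F) 0 0 = 1 := by
      have := congrFun h1 0
      simpa [Matrix.mulVec, dotProduct, Fin.sum_univ_two] using this
    have h10 : (M : Matrix (Fin 2) (Fin 2) F) 1 0 = 0 := by
      have := congrFun h1 1
      simpa [Matrix.mulVec, dotProduct, Fin.sum_univ_two] using this
    have h11 : (M : Matrix (Fin 2) (Fin 2) F) 1 1 = 1 := by
      rw [Matrix.det_fin_two, h00, h10] at h2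
      simpa using h2
    ext i j
    fin_cases i <;> fin_cases j <;> simp [Uu, h00, h10, h11]
  · rintro ⟨x, rfl⟩; exact Uu_mem x

lemma Uu_injective : Function.Injective (Uu (F := F)) := by
  intro x y h
  have := congrFun (congrFun (congrArg (fun M : GL (Fin 2) F => (M : Matrix (Fin 2) (Fin 2) F)) h) 0) 1
  simpa [Uu] using this

lemma card_TT_e1 : Nat.card (TT (![1,0] : Fin 2 → F)) = Fintype.card F := by
  have e : F ≃ TT (![1,0] : Fin 2 → F) := by
    refine Equiv.ofBijective (fun x => ⟨Uu x, Uu_mem x⟩) ⟨?_, ?_⟩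
    · intro x y h
      exact Uu_injective (by simpa using congrArg Subtype.val h)
    · rintro ⟨M, hM⟩
      obtain ⟨x, rfl⟩ := (TT_e1_char M).mp hM
      exact ⟨x, rfl⟩
  rw [← Nat.card_congr e, Nat.card_eq_fintype_card]

lemma maincase (N : GL (Fin 2) F) (h : (N : Matrix (Fin 2) (Fin 2) F).det = 1)
    (hc : (N : Matrix (Fin 2) (Fin 2) F) 1 0 ≠ 0) :
    N = Uu (((N : Matrix (Fin 2) (Fin 2) F) 0 0 - 1) / (N : Matrix (Fin 2) (Fin 2) F) 1 0) *
        Ll ((N : Matrix (Fin 2) (Fin 2) F) 1 0) *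
        Uu (((N : Matrix (Fin 2) (Fin 2) F) 1 1 - 1) / (N : Matrix (Fin 2) (Fin 2) F) 1 0) := by
  set a := (N : Matrix (Fin 2) (Fin 2) F) 0 0
  set b := (N : Matrix (Fin 2) (Fin 2) F) 0 1
  set c := (N : Matrix (Fin 2) (Fin 2) F) 1 0
  set d := (N : Matrix (Fin 2) (Fin 2) F) 1 1
  rw [Matrix.det_fin_two] at h
  ext i j
  fin_cases i <;> fin_cases j <;>
    simp [Uu, Ll, Matrix.mul_apply, Fin.sum_univ_two] <;> simp only [a, b, c, d] at hc ⊢ <;> field_simp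
  all_goals first | linear_combination h | linear_combination -2 * h | linear_combination -h | ring

lemma gen (N : GL (Fin 2) F) (h : (N : Matrix (Fin 2) (Fin 2) F).det = 1) :
    N ∈ Subgroup.closure (TT (![1,0] : Fin 2 → F) ∪ TT (![0,1] : Fin 2 → F)) := by
  set S := TT (![1,0] : Fin 2 → F) ∪ TT (![0,1] : Fin 2 → F) with hS
  have hU : ∀ x : F, Uu x ∈ Subgroup.closure S :=
    fun x => Subgroup.subset_closure (Or.inl (Uu_mem x))
  have hL : ∀ x : F, Ll x ∈ Subgroup.closure S :=
    fun x => Subgroup.subset_closure (Or.inr (Ll_mem x))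
  by_cases hc : (N : Matrix (Fin 2) (Fin 2) F) 1 0 ≠ 0
  · rw [maincase N h hc]
    exact mul_mem (mul_mem (hU _) (hL _)) (hU _)
  · push_neg at hc
    set N' := N * Ll 1 with hN'
    have hval : (N' : Matrix (Fin 2) (Fin 2) F) =
        (N : Matrix (Fin 2) (Fin 2) F) * (Ll 1 : GL (Fin 2) F) := rfl
    have hd : (N : Matrix (Fin 2) (Fin 2) F) 1 1 ≠ 0 := by
      intro h11
      rw [Matrix.det_fin_two, hc, h11] at h
      simp at h
    have hc' : (N' : Matrix (Fin 2) (Fin 2) F) 1 0 ≠ 0 := by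
      rw [hval]
      simpa [Ll, Matrix.mul_apply, Fin.sum_univ_two, hc] using hd
    have hdet' : (N' : Matrix (Fin 2) (Fin 2) F).det = 1 := by
      rw [hval, Matrix.det_mul, h]
      simp [Ll, Matrix.det_fin_two]
    have hmem : N' ∈ Subgroup.closure S := by
      rw [maincase N' hdet' hc']
      exact mul_mem (mul_mem (hU _) (hL _)) (hU _)
    have : N = N' * (Ll 1)⁻¹ := by rw [hN']; group
    rw [this]
    exact mul_mem hmem (inv_mem (hL 1))

lemma inv_val_mulVec (P : GL (Fin 2) F) (v : Fin 2 → F) :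
    Matrix.mulVec ((P⁻¹ : GL (Fin 2) F) : Matrix (Fin 2) (Fin 2) F)
      (Matrix.mulVec (P : Matrix (Fin 2) (Fin 2) F) v) = v := by
  rw [Matrix.mulVec_mulVec]
  have : ((P⁻¹ : GL (Fin 2) F) : Matrix (Fin 2) (Fin 2) F) *
      (P : Matrix (Fin 2) (Fin 2) F) = 1 := by
    rw [← Units.val_mul, inv_mul_cancel, Units.val_one]
  rw [this, Matrix.one_mulVec]

lemma conj_TT (P M : GL (Fin 2) F) (v : Fin 2 → F) (hM : M ∈ TT v) :
    P * M * P⁻¹ ∈ TT (Matrix.mulVec (P : Matrix (Fin 2) (Fin 2) F) v) := by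
  obtain ⟨h1, h2⟩ := hM
  constructor
  · show Matrix.mulVec ((P * M * P⁻¹ : GL (Fin 2) F) : Matrix (Fin 2) (Fin 2) F) _ = _
    rw [Units.val_mul, Units.val_mul, ← Matrix.mulVec_mulVec, ← Matrix.mulVec_mulVec,
      inv_val_mulVec, h1]
  · show ((P * M * P⁻¹ : GL (Fin 2) F) : Matrix (Fin 2) (Fin 2) F).det = 1
    rw [Units.val_mul, Units.val_mul, Matrix.det_mul, Matrix.det_mul, h2, mul_one]
    rw [← Matrix.det_mul, ← Units.val_mul, mul_inv_cancel, Units.val_one, Matrix.det_one]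

/-- Membership in `TT` transported by conjugation, iff version. -/
lemma mem_TT_iff_conj (P M : GL (Fin 2) F) (v : Fin 2 → F) :
    M ∈ TT (Matrix.mulVec (P : Matrix (Fin 2) (Fin 2) F) v) ↔ P⁻¹ * M * P ∈ TT v := by
  constructor
  · intro h
    have := conj_TT P⁻¹ M _ h
    rw [inv_val_mulVec] at this
    simpa using this
  · intro h
    have := conj_TT P _ v h
    have e : P * (P⁻¹ * M * P) * P⁻¹ = M := by group
    rwa [e] at this

lemma card_TT (P : GL (Fin 2) F) :
    Nat.card (TT (Matrix.mulVec (P : Matrix (Fin 2) (Fin 2) F) (![1,0] : Fin 2 → F))) =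
      Fintype.card F := by
  rw [← card_TT_e1 (F := F)]
  refine Nat.card_congr ?_
  refine ⟨fun M => ⟨P⁻¹ * M.1 * P, (mem_TT_iff_conj P M.1 _).mp M.2⟩,
    fun N => ⟨P * N.1 * P⁻¹, ?_⟩, ?_, ?_⟩
  · rw [mem_TT_iff_conj]
    have e : P⁻¹ * (P * N.1 * P⁻¹) * P = N.1 := by group
    rw [e]; exact N.2
  · intro M; ext : 1; simp only; group
  · intro N; ext : 1; simp only; group

lemma exists_GL_cols (v w : Fin 2 → F) (hdet : v 0 * w 1 - w 0 * v 1 ≠ 0) :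
    ∃ P : GL (Fin 2) F,
      Matrix.mulVec (P : Matrix (Fin 2) (Fin 2) F) (![1,0] : Fin 2 → F) = v ∧
      Matrix.mulVec (P : Matrix (Fin 2) (Fin 2) F) (![0,1] : Fin 2 → F) = w := by
  set A : Matrix (Fin 2) (Fin 2) F := !![v 0, w 0; v 1, w 1] with hA
  have hdA : A.det ≠ 0 := by rw [hA, Matrix.det_fin_two]; simpa using hdet
  have hu : IsUnit A := (Matrix.isUnit_iff_isUnit_det A).mpr (isUnit_iff_ne_zero.mpr hdA)
  refine ⟨hu.unit, ?_, ?_⟩ <;>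
    · ext i; fin_cases i <;>
        simp [hu.unit_spec, hA, Matrix.mulVec, dotProduct, Fin.sum_univ_two]

lemma not_span_det (v w : Fin 2 → F) (hv : v ≠ 0) (hw : w ∉ Submodule.span F {v}) :
    v 0 * w 1 - w 0 * v 1 ≠ 0 := by
  intro h
  apply hw
  rw [Submodule.mem_span_singleton]
  by_cases h0 : v 0 ≠ 0
  · refine ⟨w 0 / v 0, ?_⟩
    ext i; fin_cases i
    · simp [div_mul_cancel₀, h0]
    · show w 0 / v 0 * v 1 = w 1
      field_simp
      linear_combination -h
  · push_neg at h0
    have h1 : v 1 ≠ 0 := by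
      intro h1
      apply hv
      ext i; fin_cases i <;> simp [h0, h1]
    refine ⟨w 1 / v 1, ?_⟩
    have hw0 : w 0 = 0 := by
      have hz : w 0 * v 1 = 0 := by linear_combination -h + w 1 * h0
      exact (mul_eq_zero.mp hz).resolve_right h1
    ext i; fin_cases i
    · simp [h0, hw0]
    · show w 1 / v 1 * v 1 = w 1
      field_simp

end SL2Aux

namespace SL2Aux2
open SL2Aux

variable {F : Type*} [Field F] [Fintype F]

lemma det_mem_eq_one (K : Subgroup (GL (Fin 2) F)) (hK : Nat.card K = Fintype.card F)
    (hF : 4 ≤ Fintype.card F) (M : GL (Fin 2) F) (hM : M ∈ K) :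
    (M : Matrix (Fin 2) (Fin 2) F).det = 1 := by
  set q := Fintype.card F with hq
  have hpow : M ^ q = 1 := by
    have h1 : (⟨M, hM⟩ : K) ^ (Nat.card K) = 1 := pow_card_eq_one'
    rw [hK] at h1
    have := congrArg (Subtype.val) h1
    simpa using this
  set d := (M : Matrix (Fin 2) (Fin 2) F).det with hd
  have hdq : d ^ q = 1 := by
    rw [hd, ← Matrix.det_pow, ← Units.val_pow_eq_pow_val, hpow, Units.val_one, Matrix.det_one]
  have hne : d ≠ 0 := by
    have : IsUnit d := (Matrix.isUnit_iff_isUnit_det _).mp M.isUnit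
    exact this.ne_zero
  have h1 : d ^ (q - 1) = 1 := FiniteField.pow_card_sub_one_eq_one d hne
  have hq1 : q - 1 + 1 = q := Nat.succ_pred_eq_of_pos (lt_of_lt_of_le (by norm_num) hF)
  calc d = d ^ (q - 1) * d := by rw [h1, one_mul]
    _ = d ^ (q - 1 + 1) := (pow_succ d (q - 1)).symm
    _ = 1 := by rw [hq1, hdq]

abbrev NZ (F : Type*) [Field F] : Type _ := {x : Fin 2 → F // x ≠ 0}

instance : MulAction (GL (Fin 2) F) (NZ F) where
  smul M x := ⟨Matrix.mulVec (M : Matrix (Fin 2) (Fin 2) F) x.1, by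
    intro h0
    apply x.2
    have h := inv_val_mulVec M x.1
    rw [h0, Matrix.mulVec_zero] at h
    exact h.symm⟩
  one_smul x := by
    apply Subtype.ext
    show Matrix.mulVec ((1 : GL (Fin 2) F) : Matrix (Fin 2) (Fin 2) F) x.1 = x.1
    simp
  mul_smul M N x := by
    apply Subtype.ext
    show Matrix.mulVec ((M * N : GL (Fin 2) F) : Matrix (Fin 2) (Fin 2) F) x.1
      = Matrix.mulVec (M : Matrix (Fin 2) (Fin 2) F)
          (Matrix.mulVec (N : Matrix (Fin 2) (Fin 2) F) x.1)
    rw [Matrix.mulVec_mulVec, Units.val_mul]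

lemma smul_NZ_def (M : GL (Fin 2) F) (x : NZ F) :
    (M • x).1 = Matrix.mulVec (M : Matrix (Fin 2) (Fin 2) F) x.1 := rfl

lemma card_NZ : Nat.card (NZ F) = Fintype.card F ^ 2 - 1 := by
  classical
  rw [Nat.card_eq_fintype_card]
  show Fintype.card {x : Fin 2 → F // ¬ (x = 0)} = _
  rw [Fintype.card_subtype_compl, Fintype.card_subtype_eq, Fintype.card_fun]
  simp [sq]

lemma exists_fixed_vector (K : Subgroup (GL (Fin 2) F)) (hK : Nat.card K = Fintype.card F)
    (hF : 4 ≤ Fintype.card F) :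
    ∃ v : Fin 2 → F, v ≠ 0 ∧ ∀ M : GL (Fin 2) F, M ∈ K →
      Matrix.mulVec (M : Matrix (Fin 2) (Fin 2) F) v = v := by
  classical
  obtain ⟨p, hCharP⟩ := CharP.exists F
  haveI := hCharP
  obtain ⟨n, hp, hcard⟩ := FiniteField.card F p
  haveI : Fact p.Prime := ⟨hp⟩
  have hPG : IsPGroup p K := IsPGroup.of_card (n := n) (by rw [hK, hcard])
  have hndvd : ¬ p ∣ Nat.card (NZ F) := by
    rw [card_NZ, hcard]
    intro hdvd
    have hq2 : 1 ≤ (p ^ (n : ℕ)) ^ 2 := Nat.one_le_pow _ _ (Nat.pow_pos hp.pos)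
    have h2 : p ∣ (p ^ (n : ℕ)) ^ 2 := dvd_pow (dvd_pow_self p n.pos.ne') two_ne_zero
    have h1 : p ∣ 1 := by
      have := Nat.dvd_sub h2 hdvd
      rwa [Nat.sub_sub_self (by omega)] at this
    exact hp.one_lt.ne' (Nat.dvd_one.mp h1)
  obtain ⟨x, hx⟩ := hPG.nonempty_fixed_point_of_prime_not_dvd_card (NZ F) hndvd
  rw [MulAction.mem_fixedPoints] at hx
  refine ⟨x.1, x.2, ?_⟩
  intro M hM
  have := congrArg Subtype.val (hx ⟨M, hM⟩)
  simpa [smul_NZ_def] using this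

end SL2Aux2


open SL2Aux SL2Aux2

/-- Let `F` be a finite field with at least `4` elements and `G ≤ GL₂(F)` a subgroup that
contains a subgroup of order `|F|` and acts irreducibly on `F²`.  Then `G` contains
`SL₂(F)`. -/
theorem contains_SL2_of_irreducible (F : Type*) [Field F] [Fintype F]
    (hF : 4 ≤ Fintype.card F) (G : Subgroup (GL (Fin 2) F))
    (hsub : ∃ K : Subgroup (GL (Fin 2) F), K ≤ G ∧ Nat.card K = Fintype.card F)
    (hirr : ∀ W : Submodule F (Fin 2 → F),
      (∀ g ∈ G, ∀ v ∈ W, Matrix.mulVec (g : Matrix (Fin 2) (Fin 2) F) v ∈ W) →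
      W = ⊥ ∨ W = ⊤) :
    ∀ M : GL (Fin 2) F, (M : Matrix (Fin 2) (Fin 2) F).det = 1 → M ∈ G := by
  classical
  intro M hdetM
  obtain ⟨K, hKG, hKcard⟩ := hsub
  obtain ⟨v, hv, hfix⟩ := exists_fixed_vector K hKcard hF
  have hPex : ∃ P : GL (Fin 2) F,
      Matrix.mulVec (P : Matrix (Fin 2) (Fin 2) F) (![1,0] : Fin 2 → F) = v := by
    by_cases h0 : v 0 = 0
    · have h1 : v 1 ≠ 0 := fun h1 => hv (by ext i; fin_cases i <;> simp [h0, h1])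
      obtain ⟨P, hP, -⟩ := exists_GL_cols v ![1,0] (by simpa [h0] using h1)
      exact ⟨P, hP⟩
    · obtain ⟨P, hP, -⟩ := exists_GL_cols v ![0,1] (by simpa using h0)
      exact ⟨P, hP⟩
  obtain ⟨P, hP⟩ := hPex
  have hKsub : (K : Set (GL (Fin 2) F)) ⊆ TT v :=
    fun g hg => ⟨hfix g hg, det_mem_eq_one K hKcard hF g hg⟩
  have hcardTT : Nat.card (TT v) = Fintype.card F := by
    have := card_TT (F := F) P
    rwa [hP] at this
  have hTTv : TT v ⊆ (G : Set (GL (Fin 2) F)) := by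
    have h1 : (TT v).ncard ≤ (K : Set (GL (Fin 2) F)).ncard := by
      rw [← Nat.card_coe_set_eq, ← Nat.card_coe_set_eq, hcardTT,
        show Nat.card ↥(K : Set (GL (Fin 2) F)) = Nat.card K from rfl, hKcard]
    have heq := Set.eq_of_subset_of_ncard_le hKsub h1 (Set.toFinite _)
    rw [← heq]
    exact fun x hx => hKG hx
  have hW : ∃ g ∈ G, Matrix.mulVec ((g : GL (Fin 2) F) : Matrix (Fin 2) (Fin 2) F) v ∉
      Submodule.span F {v} := by
    by_contra hcon
    push_neg at hcon
    have hinv : ∀ g ∈ G, ∀ x ∈ Submodule.span F {v},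
        Matrix.mulVec ((g : GL (Fin 2) F) : Matrix (Fin 2) (Fin 2) F) x ∈
          Submodule.span F {v} := by
      intro g hg x hx
      obtain ⟨t, rfl⟩ := Submodule.mem_span_singleton.mp hx
      rw [Matrix.mulVec_smul]
      exact Submodule.smul_mem _ t (hcon g hg)
    rcases hirr _ hinv with hbot | htop
    · exact hv (Submodule.span_singleton_eq_bot.mp hbot)
    · have h1 : Module.finrank F (Submodule.span F {v}) = 1 := finrank_span_singleton hv
      rw [htop, finrank_top] at h1
      have h2 : Module.finrank F (Fin 2 → F) = 2 := by simp
      omega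
  obtain ⟨g, hgG, hgw⟩ := hW
  set w := Matrix.mulVec ((g : GL (Fin 2) F) : Matrix (Fin 2) (Fin 2) F) v with hwdef
  have hTTw : TT w ⊆ (G : Set (GL (Fin 2) F)) := by
    intro N hN
    have hN' : g⁻¹ * N * g ∈ TT v := (mem_TT_iff_conj g N v).mp hN
    have hrep : N = g * (g⁻¹ * N * g) * g⁻¹ := by group
    rw [hrep]
    exact G.mul_mem (G.mul_mem hgG (hTTv hN')) (G.inv_mem hgG)
  obtain ⟨Q, hQ1, hQ2⟩ := exists_GL_cols v w (not_span_det v w hv hgw)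
  set N := Q⁻¹ * M * Q with hNdef
  have hdetN : ((N : GL (Fin 2) F) : Matrix (Fin 2) (Fin 2) F).det = 1 := by
    rw [hNdef, Units.val_mul, Units.val_mul, Matrix.det_mul, Matrix.det_mul, hdetM, mul_one,
      ← Matrix.det_mul, ← Units.val_mul, inv_mul_cancel, Units.val_one, Matrix.det_one]
  have hNmem := gen N hdetN
  set f : GL (Fin 2) F →* GL (Fin 2) F := (MulAut.conj Q).toMonoidHom with hf
  have hfN : f N ∈ (Subgroup.closure
      (TT (![1,0] : Fin 2 → F) ∪ TT (![0,1] : Fin 2 → F))).map f :=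
    Subgroup.mem_map_of_mem f hNmem
  rw [MonoidHom.map_closure] at hfN
  have hle : Subgroup.closure
      (f '' (TT (![1,0] : Fin 2 → F) ∪ TT (![0,1] : Fin 2 → F))) ≤ G := by
    rw [Subgroup.closure_le]
    rintro y ⟨x, hx, rfl⟩
    rcases hx with hx | hx
    · have := conj_TT Q x _ hx
      rw [hQ1] at this
      exact hTTv this
    · have := conj_TT Q x _ hx
      rw [hQ2] at this
      exact hTTw this
  have hMf : f N = M := by
    show MulAut.conj Q N = M
    rw [MulAut.conj_apply, hNdef]
    group
  rw [hMf] at hfN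
  exact hle hfN
end

section
/- Let F be a finite field with |F| ≥ 4 and let N ≤ GL₂(F) be a normal subgroup of GL₂(F) containing a nontrivial unipotent upper-triangular matrix. Then N contains SL₂(F). -/
open Matrix

/-- Let `F` be a finite field with `|F| ≥ 4` and `N` a normal subgroup of `GL₂(F)`
containing a nontrivial unipotent upper-triangular matrix.  Then `N ⊇ SL₂(F)`. -/
theorem normal_subgroup_contains_SL2 (F : Type*) [Field F] [Fintype F]
    (hF : 4 ≤ Fintype.card F) (N : Subgroup (GL (Fin 2) F)) (hN : N.Normal)
    (hu : ∃ t : F, t ≠ 0 ∧ ∃ u ∈ N, (u : Matrix (Fin 2) (Fin 2) F) = !![1, t; 0, 1]) :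
    ∀ M : GL (Fin 2) F, (M : Matrix (Fin 2) (Fin 2) F).det = 1 → M ∈ N := by
  obtain ⟨t, ht, u, huN, humat⟩ := hu
  -- all upper elementary matrices lie in N
  have hE12 : ∀ s : F, ∃ g ∈ N, (g : Matrix (Fin 2) (Fin 2) F) = !![1, s; 0, 1] := by
    intro s
    rcases eq_or_ne s 0 with rfl | hs
    · exact ⟨1, N.one_mem, by simp [Matrix.one_fin_two]⟩
    · have ha0 : s * t⁻¹ ≠ 0 := mul_ne_zero hs (inv_ne_zero ht)
      have pf1 : !![s * t⁻¹, 0; 0, 1] * !![(s * t⁻¹)⁻¹, 0; 0, 1]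
          = (1 : Matrix (Fin 2) (Fin 2) F) := by
        have h1 : s * t⁻¹ * (s * t⁻¹)⁻¹ = 1 := mul_inv_cancel₀ ha0
        rw [Matrix.mul_fin_two, Matrix.one_fin_two]
        simp only [mul_zero, zero_mul, mul_one, one_mul, add_zero, zero_add, h1]
      have pf2 : !![(s * t⁻¹)⁻¹, 0; 0, 1] * !![s * t⁻¹, 0; 0, 1]
          = (1 : Matrix (Fin 2) (Fin 2) F) := by
        have h1 : (s * t⁻¹)⁻¹ * (s * t⁻¹) = 1 := inv_mul_cancel₀ ha0
        rw [Matrix.mul_fin_two, Matrix.one_fin_two]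
        simp only [mul_zero, zero_mul, mul_one, one_mul, add_zero, zero_add, h1]
      set D : GL (Fin 2) F := ⟨_, _, pf1, pf2⟩ with hD
      refine ⟨D * u * D⁻¹, hN.conj_mem u huN D, ?_⟩
      have hval : ((D * u * D⁻¹ : GL (Fin 2) F) : Matrix (Fin 2) (Fin 2) F)
          = !![s * t⁻¹, 0; 0, 1] * !![1, t; 0, 1] * !![(s * t⁻¹)⁻¹, 0; 0, 1] := by
        simp [hD, Units.val_mul, humat]
      rw [hval, Matrix.mul_fin_two, Matrix.mul_fin_two]
      have : s * t⁻¹ * t = s := by field_simp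
      ext i j
      fin_cases i <;> fin_cases j <;> simp <;> field_simp
  -- all lower elementary matrices lie in N
  have hE21 : ∀ s : F, ∃ g ∈ N, (g : Matrix (Fin 2) (Fin 2) F) = !![1, 0; s, 1] := by
    intro s
    obtain ⟨g, hgN, hg⟩ := hE12 s
    have pf : !![(0 : F), 1; 1, 0] * !![0, 1; 1, 0] = (1 : Matrix (Fin 2) (Fin 2) F) := by
      rw [Matrix.mul_fin_two, Matrix.one_fin_two]; norm_num
    set W : GL (Fin 2) F := ⟨_, _, pf, pf⟩ with hW
    refine ⟨W * g * W⁻¹, hN.conj_mem g hgN W, ?_⟩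
    have hval : ((W * g * W⁻¹ : GL (Fin 2) F) : Matrix (Fin 2) (Fin 2) F)
        = !![(0 : F), 1; 1, 0] * !![1, s; 0, 1] * !![0, 1; 1, 0] := by
      simp [hW, Units.val_mul, hg]
    rw [hval, Matrix.mul_fin_two, Matrix.mul_fin_two]
    norm_num
  -- key case: lower-left entry nonzero
  have hlow : ∀ M : GL (Fin 2) F, (M : Matrix (Fin 2) (Fin 2) F).det = 1 →
      (M : Matrix (Fin 2) (Fin 2) F) 1 0 ≠ 0 → M ∈ N := by
    intro M hdet hc
    set a : F := (M : Matrix (Fin 2) (Fin 2) F) 0 0 with hA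
    set b : F := (M : Matrix (Fin 2) (Fin 2) F) 0 1 with hB
    set c : F := (M : Matrix (Fin 2) (Fin 2) F) 1 0 with hC
    set d : F := (M : Matrix (Fin 2) (Fin 2) F) 1 1 with hD
    have hdet' : a * d - b * c = 1 := by
      rw [Matrix.det_fin_two] at hdet; exact hdet
    obtain ⟨g1, hg1N, hg1⟩ := hE12 ((a - 1) * c⁻¹)
    obtain ⟨g2, hg2N, hg2⟩ := hE21 c
    obtain ⟨g3, hg3N, hg3⟩ := hE12 ((d - 1) * c⁻¹)
    have hM : M = g1 * g2 * g3 := by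
      apply Units.ext
      rw [Units.val_mul, Units.val_mul, hg1, hg2, hg3,
        Matrix.eta_fin_two (M : Matrix (Fin 2) (Fin 2) F)]
      rw [Matrix.mul_fin_two, Matrix.mul_fin_two]
      ext i j
      fin_cases i <;> fin_cases j <;> simp [← hA, ← hB, ← hC, ← hD] <;> field_simp <;>
        first
          | linear_combination hdet'
          | linear_combination (-2 : F) * hdet'
          | linear_combination (2 : F) * hdet'
          | linear_combination (-1 : F) * hdet'
          | ring
    rw [hM]
    exact N.mul_mem (N.mul_mem hg1N hg2N) hg3N
  intro M hdet
  by_cases hc : (M : Matrix (Fin 2) (Fin 2) F) 1 0 ≠ 0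
  · exact hlow M hdet hc
  · push_neg at hc
    obtain ⟨g, hgN, hg⟩ := hE21 1
    have hgm : ((g * M : GL (Fin 2) F) : Matrix (Fin 2) (Fin 2) F)
        = !![1, 0; 1, 1] * (M : Matrix (Fin 2) (Fin 2) F) := by
      rw [Units.val_mul, hg]
    have hdet2 : ((g * M : GL (Fin 2) F) : Matrix (Fin 2) (Fin 2) F).det = 1 := by
      rw [hgm, Matrix.det_mul, hdet, Matrix.det_fin_two_of]
      norm_num
    have ha : (M : Matrix (Fin 2) (Fin 2) F) 0 0 ≠ 0 := by
      intro h0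
      rw [Matrix.det_fin_two, hc, h0] at hdet
      simp at hdet
    have hc2 : ((g * M : GL (Fin 2) F) : Matrix (Fin 2) (Fin 2) F) 1 0 ≠ 0 := by
      rw [hgm]
      have : ((!![1, 0; 1, 1] : Matrix (Fin 2) (Fin 2) F)
            * (M : Matrix (Fin 2) (Fin 2) F)) 1 0
          = (M : Matrix (Fin 2) (Fin 2) F) 0 0 + (M : Matrix (Fin 2) (Fin 2) F) 1 0 := by
        simp [Matrix.mul_apply, Fin.sum_univ_two]
      rw [this, hc, add_zero]
      exact ha
    have hmem : g * M ∈ N := hlow (g * M) hdet2 hc2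
    have : M = g⁻¹ * (g * M) := by group
    rw [this]
    exact N.mul_mem (N.inv_mem hgN) hmem
end
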